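/- In a two-regime discrete setting with regimes o and s, if simple stability holds (for each i there is a common conditional pmf w_i(l_i; l̄_{i-1}, ā_{i-1}) valid in both regimes wherever defined) and positivity holds (every event of positive P_s-probability has positive P_o-probability), then the consequence E[k(Y); s] is identified from the observational regime: E[k(Y); s] = Σ over all (l̄_{n+1}, ā_n) with positive P_s-probability of k(l_{n+1}) · Π_{i=1}^{n+1} p(l_i | l̄_{i-1}, ā_{i-1}; o) · Π_{i=1}^n p(a_i | l̄_i, ā_{i-1}; s). -/

import Mathlib

open MeasureTheory

/-- The partial-history event: the first `p` of the `L`'s and the first `q` of the `A`'s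
take the prescribed values (0-based indexing; the time order is `L 0, A 0, L 1, A 1, …`,
so `L i` corresponds to `L_{i+1}` and `A i` to `A_{i+1}` of the paper). -/
def LAEvent {Ω : Type*} {n : ℕ} (L : Fin (n + 1) → Ω → ℕ) (A : Fin n → Ω → ℕ)
    (l : Fin (n + 1) → ℕ) (a : Fin n → ℕ) (p q : ℕ) : Set Ω :=
  {ω | (∀ j : Fin (n + 1), (j : ℕ) < p → L j ω = l j) ∧
       (∀ j : Fin n, (j : ℕ) < q → A j ω = a j)}

lemma measurableSet_LAEvent {Ω : Type*} [MeasurableSpace Ω] {n : ℕ}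
    (L : Fin (n + 1) → Ω → ℕ) (A : Fin n → Ω → ℕ)
    (hL : ∀ i, Measurable (L i)) (hA : ∀ i, Measurable (A i))
    (l : Fin (n + 1) → ℕ) (a : Fin n → ℕ) (p q : ℕ) :
    MeasurableSet (LAEvent L A l a p q) := by
  have : LAEvent L A l a p q =
      (⋂ (j : Fin (n + 1)) (_ : (j : ℕ) < p), {ω | L j ω = l j}) ∩
      (⋂ (j : Fin n) (_ : (j : ℕ) < q), {ω | A j ω = a j}) := by
    ext ω; simp [LAEvent]
  rw [this]
  exact (MeasurableSet.iInter fun j => MeasurableSet.iInter fun _ =>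
      (hL j) (measurableSet_singleton (l j))).inter
    (MeasurableSet.iInter fun j => MeasurableSet.iInter fun _ =>
      (hA j) (measurableSet_singleton (a j)))

lemma LAEvent_anti {Ω : Type*} {n : ℕ} (L : Fin (n + 1) → Ω → ℕ) (A : Fin n → Ω → ℕ)
    (l : Fin (n + 1) → ℕ) (a : Fin n → ℕ) {p q p' q' : ℕ} (hp : p ≤ p') (hq : q ≤ q') :
    LAEvent L A l a p' q' ⊆ LAEvent L A l a p q := by
  intro ω ⟨h1, h2⟩
  exact ⟨fun j hj => h1 j (lt_of_lt_of_le hj hp), fun j hj => h2 j (lt_of_lt_of_le hj hq)⟩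

lemma LAEvent_zero {Ω : Type*} {n : ℕ} (L : Fin (n + 1) → Ω → ℕ) (A : Fin n → Ω → ℕ)
    (l : Fin (n + 1) → ℕ) (a : Fin n → ℕ) : LAEvent L A l a 0 0 = Set.univ := by
  ext ω; simp [LAEvent]

lemma telescope (n : ℕ) (P : ℕ → ℕ → ℝ)
    (hne : ∀ p q, p ≤ n + 1 → q ≤ n → P p q ≠ 0) (h00 : P 0 0 = 1) :
    ∀ m, m ≤ n → (∏ i ∈ Finset.range (m + 1), P (i + 1) i / P i i) *
      (∏ i ∈ Finset.range m, P (i + 1) (i + 1) / P (i + 1) i) = P (m + 1) m := by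
  intro m
  induction m with
  | zero => intro _; simp [h00]
  | succ m ih =>
    intro hm
    have ih' := ih (by omega)
    have h1 : P (m + 1) m ≠ 0 := hne _ _ (by omega) (by omega)
    have h2 : P (m + 1) (m + 1) ≠ 0 := hne _ _ (by omega) (by omega)
    rw [Finset.prod_range_succ (fun i => P (i + 1) (i + 1) / P (i + 1) i) m,
      Finset.prod_range_succ (fun i => P (i + 1) i / P i i) (m + 1)]
    calc ((∏ i ∈ Finset.range (m + 1), P (i + 1) i / P i i) * (P (m + 1 + 1) (m + 1) / P (m + 1) (m + 1)))
          * ((∏ i ∈ Finset.range m, P (i + 1) (i + 1) / P (i + 1) i) * (P (m + 1) (m + 1) / P (m + 1) m))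
        = ((∏ i ∈ Finset.range (m + 1), P (i + 1) i / P i i) *
            (∏ i ∈ Finset.range m, P (i + 1) (i + 1) / P (i + 1) i)) *
          ((P (m + 1 + 1) (m + 1) / P (m + 1) (m + 1)) * (P (m + 1) (m + 1) / P (m + 1) m)) := by
          ring
      _ = P (m + 1) m * ((P (m + 1 + 1) (m + 1) / P (m + 1) (m + 1)) * (P (m + 1) (m + 1) / P (m + 1) m)) := by
          rw [ih']
      _ = P (m + 1 + 1) (m + 1) := by field_simp

open scoped Classical in
/-- Discrete G-computation with observational ingredients: under simple stability and
positivity, the consequence `E[k(Y) ; s]` equals the sum, over all configurations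
`(l̄_{n+1}, ā_n)` of positive interventional probability, of
`k(l_{n+1}) · ∏ᵢ p(lᵢ | l̄_{i-1}, ā_{i-1} ; o) · ∏ᵢ p(aᵢ | l̄ᵢ, ā_{i-1} ; s)`. -/
theorem discrete_G_computation_identification
    {Ω : Type*} [MeasurableSpace Ω] (n : ℕ)
    (Po Ps : Measure Ω) [IsProbabilityMeasure Po] [IsProbabilityMeasure Ps]
    (L : Fin (n + 1) → Ω → ℕ) (A : Fin n → Ω → ℕ)
    (hL : ∀ i, Measurable (L i)) (hA : ∀ i, Measurable (A i))
    (k : ℕ → ℝ) (hk : ∃ C, ∀ y, |k y| ≤ C)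
    -- simple stability: for each i a common conditional pmf of L_i given the past, valid in
    -- both regimes wherever the conditioning event has positive probability
    (hSS : ∀ i : Fin (n + 1), ∃ w : (Fin (n + 1) → ℕ) → (Fin n → ℕ) → ℝ,
      ∀ (l : Fin (n + 1) → ℕ) (a : Fin n → ℕ),
        (0 < Po (LAEvent L A l a i i) →
          (Po (LAEvent L A l a (i + 1) i)).toReal /
            (Po (LAEvent L A l a i i)).toReal = w l a) ∧
        (0 < Ps (LAEvent L A l a i i) →
          (Ps (LAEvent L A l a (i + 1) i)).toReal /
            (Ps (LAEvent L A l a i i)).toReal = w l a))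
    -- positivity: every event of positive P_s-probability has positive P_o-probability
    (hpos : ∀ E : Set Ω, MeasurableSet E → 0 < Ps E → 0 < Po E) :
    ∫ ω, k (L ⟨n, Nat.lt_succ_self n⟩ ω) ∂Ps =
      ∑' p : (Fin (n + 1) → ℕ) × (Fin n → ℕ),
        if 0 < Ps (LAEvent L A p.1 p.2 (n + 1) n) then
          k (p.1 ⟨n, Nat.lt_succ_self n⟩) *
            (∏ i : Fin (n + 1),
              (Po (LAEvent L A p.1 p.2 ((i : ℕ) + 1) i)).toReal /
                (Po (LAEvent L A p.1 p.2 i i)).toReal) *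
            (∏ i : Fin n,
              (Ps (LAEvent L A p.1 p.2 ((i : ℕ) + 1) ((i : ℕ) + 1))).toReal /
                (Ps (LAEvent L A p.1 p.2 ((i : ℕ) + 1) i)).toReal)
        else 0 := by
  obtain ⟨C, hC⟩ := hk
  have hkm : Measurable k := measurable_from_top
  set T : Ω → (Fin (n + 1) → ℕ) × (Fin n → ℕ) :=
    fun ω => (fun j => L j ω, fun j => A j ω) with hTdef
  have hT : Measurable T :=
    (measurable_pi_lambda _ fun j => hL j).prodMk (measurable_pi_lambda _ fun j => hA j)
  set g : (Fin (n + 1) → ℕ) × (Fin n → ℕ) → ℝ :=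
    fun x => k (x.1 ⟨n, Nat.lt_succ_self n⟩) with hgdef
  have hg : Measurable g := hkm.comp ((measurable_pi_apply _).comp measurable_fst)
  have hTpre : ∀ x : (Fin (n + 1) → ℕ) × (Fin n → ℕ),
      T ⁻¹' {x} = LAEvent L A x.1 x.2 (n + 1) n := by
    intro x
    ext ω
    simp only [Set.mem_preimage, Set.mem_singleton_iff, hTdef, Prod.ext_iff, funext_iff,
      LAEvent, Set.mem_setOf_eq]
    constructor
    · rintro ⟨h1, h2⟩
      exact ⟨fun j _ => h1 j, fun j _ => h2 j⟩
    · rintro ⟨h1, h2⟩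
      exact ⟨fun j => h1 j (by omega), fun j => h2 j j.isLt⟩
  haveI : IsProbabilityMeasure (Ps.map T) := Measure.isProbabilityMeasure_map hT.aemeasurable
  have hint : Integrable g (Ps.map T) :=
    Integrable.mono' (integrable_const C) hg.aestronglyMeasurable
      (ae_of_all _ fun x => by simpa using hC _)
  have h0 : ∫ ω, k (L ⟨n, Nat.lt_succ_self n⟩ ω) ∂Ps = ∫ x, g x ∂(Ps.map T) :=
    (integral_map hT.aemeasurable hg.aestronglyMeasurable).symm
  rw [h0, integral_countable' hint]
  refine tsum_congr fun x => ?_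
  rw [measureReal_def, Measure.map_apply hT (measurableSet_singleton x), hTpre x]
  by_cases hx : 0 < Ps (LAEvent L A x.1 x.2 (n + 1) n)
  · rw [if_pos hx]
    have hmeas : ∀ p q : ℕ, MeasurableSet (LAEvent L A x.1 x.2 p q) := fun p q =>
      measurableSet_LAEvent L A hL hA x.1 x.2 p q
    have hPs : ∀ p q : ℕ, p ≤ n + 1 → q ≤ n → 0 < Ps (LAEvent L A x.1 x.2 p q) :=
      fun p q hp hq => lt_of_lt_of_le hx (measure_mono (LAEvent_anti L A x.1 x.2 hp hq))
    have hPo : ∀ p q : ℕ, p ≤ n + 1 → q ≤ n → 0 < Po (LAEvent L A x.1 x.2 p q) :=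
      fun p q hp hq => hpos _ (hmeas p q) (hPs p q hp hq)
    have hPsR : ∀ p q : ℕ, p ≤ n + 1 → q ≤ n →
        (Ps (LAEvent L A x.1 x.2 p q)).toReal ≠ 0 := fun p q hp hq =>
      (ENNReal.toReal_pos (hPs p q hp hq).ne' (measure_ne_top _ _)).ne'
    have hstep : ∀ i : Fin (n + 1),
        (Po (LAEvent L A x.1 x.2 ((i : ℕ) + 1) i)).toReal /
          (Po (LAEvent L A x.1 x.2 i i)).toReal =
        (Ps (LAEvent L A x.1 x.2 ((i : ℕ) + 1) i)).toReal /
          (Ps (LAEvent L A x.1 x.2 i i)).toReal := by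
      intro i
      obtain ⟨w, hw⟩ := hSS i
      have hi : (i : ℕ) ≤ n := Nat.lt_succ_iff.mp i.isLt
      rw [(hw x.1 x.2).1 (hPo i i (by omega) hi), (hw x.1 x.2).2 (hPs i i (by omega) hi)]
    have hprod1 : (∏ i : Fin (n + 1),
        (Po (LAEvent L A x.1 x.2 ((i : ℕ) + 1) i)).toReal /
          (Po (LAEvent L A x.1 x.2 i i)).toReal) =
        ∏ i ∈ Finset.range (n + 1),
          (Ps (LAEvent L A x.1 x.2 (i + 1) i)).toReal /
            (Ps (LAEvent L A x.1 x.2 i i)).toReal := by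
      rw [Finset.prod_congr rfl fun i _ => hstep i]
      exact Fin.prod_univ_eq_prod_range
        (fun i => (Ps (LAEvent L A x.1 x.2 (i + 1) i)).toReal /
          (Ps (LAEvent L A x.1 x.2 i i)).toReal) (n + 1)
    have hprod2 : (∏ i : Fin n,
        (Ps (LAEvent L A x.1 x.2 ((i : ℕ) + 1) ((i : ℕ) + 1))).toReal /
          (Ps (LAEvent L A x.1 x.2 ((i : ℕ) + 1) i)).toReal) =
        ∏ i ∈ Finset.range n,
          (Ps (LAEvent L A x.1 x.2 (i + 1) (i + 1))).toReal /
            (Ps (LAEvent L A x.1 x.2 (i + 1) i)).toReal :=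
      Fin.prod_univ_eq_prod_range
        (fun i => (Ps (LAEvent L A x.1 x.2 (i + 1) (i + 1))).toReal /
          (Ps (LAEvent L A x.1 x.2 (i + 1) i)).toReal) n
    have h00 : (Ps (LAEvent L A x.1 x.2 0 0)).toReal = 1 := by
      rw [LAEvent_zero, measure_univ, ENNReal.toReal_one]
    have htel := telescope n (fun p q => (Ps (LAEvent L A x.1 x.2 p q)).toReal)
      hPsR h00 n le_rfl
    rw [smul_eq_mul, hprod1, hprod2]
    simp only [hgdef]
    linear_combination (-(k (x.1 ⟨n, Nat.lt_succ_self n⟩))) * htel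
  · rw [if_neg hx]
    have h0' : Ps (LAEvent L A x.1 x.2 (n + 1) n) = 0 :=
      le_antisymm (not_lt.mp hx) zero_le
    simp [h0']
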